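/- Let F be a field, m ≥ 1, and let M₁, M₂ ∈ F^{m×m} satisfy rank(M₂ − M₁) + rank(M₁) = rank(M₂) and rank(M₂) ≥ rank(M₁) + 2. Then there exists M' ∈ F^{m×m} with rank(M') = rank(M₁) + 1, rank(M' − M₁) = 1, and rank(M₂ − M') + rank(M') = rank(M₂); that is, M₁ ≺ M' ≺ M₂. (This shows the matrix poset is graded by matrix rank: covering relations raise rank by exactly one.) -/

import Mathlib

open Matrix FiniteDimensional

private lemma rank_add_le' {F : Type*} [Field F] {m : ℕ}
    (A B : Matrix (Fin m) (Fin m) F) : (A + B).rank ≤ A.rank + B.rank := by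
  rw [Matrix.rank, Matrix.rank, Matrix.rank, Matrix.mulVecLin_add]
  refine le_trans (Submodule.finrank_mono ?_)
    (Submodule.finrank_add_le_finrank_add_finrank _ _)
  rintro x ⟨y, rfl⟩
  exact Submodule.add_mem_sup ⟨y, rfl⟩ ⟨y, rfl⟩

/-- If `M₁ ⪯ M₂` and `rank(M₂) ≥ rank(M₁) + 2`, then there is an
intermediate matrix `M'` with `M₁ ≺ M' ≺ M₂` and `rank(M') = rank(M₁) + 1`. -/
theorem stmt1 (F : Type*) [Field F] (m : ℕ) (hm : 1 ≤ m)
    (M₁ M₂ : Matrix (Fin m) (Fin m) F)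
    (hdom : (M₂ - M₁).rank + M₁.rank = M₂.rank)
    (hgap : M₁.rank + 2 ≤ M₂.rank) :
    ∃ M' : Matrix (Fin m) (Fin m) F,
      M'.rank = M₁.rank + 1 ∧ (M' - M₁).rank = 1 ∧
        (M₂ - M').rank + M'.rank = M₂.rank := by
  set D : Matrix (Fin m) (Fin m) F := M₂ - M₁ with hD
  have hr2 : 2 ≤ D.rank := by omega
  -- D ≠ 0, pick nonzero entry
  have hDne : D ≠ 0 := by
    intro h; rw [h, Matrix.rank_zero] at hr2; omega
  obtain ⟨i, j, hij⟩ : ∃ i j, D i j ≠ 0 := by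
    by_contra h; push_neg at h
    exact hDne (by ext a b; exact h a b)
  -- the rank one update
  set R : Matrix (Fin m) (Fin m) F :=
    Matrix.of (fun a b => (D i j)⁻¹ * (D a j * D i b)) with hR
  set c : Fin m → F := fun a => D a j with hc
  have hcD : D.mulVec (Pi.single j 1) = c := by
    ext a
    simp [hc, Matrix.mulVec, dotProduct, Pi.single_apply, mul_ite,
      Finset.sum_ite_eq']
  have hcne : c ≠ 0 := fun h => hij (by simpa [hc] using congrFun h i)
  -- R.mulVec x is a multiple of c
  have hRmul : ∀ x, R.mulVec x = ((D i j)⁻¹ * (∑ b, D i b * x b)) • c := by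
    intro x; ext a
    simp only [Matrix.mulVec, dotProduct, hR, Matrix.of_apply, Pi.smul_apply,
      smul_eq_mul, hc, Finset.mul_sum, Finset.sum_mul]
    exact Finset.sum_congr rfl fun b _ => by ring
  -- rank R = 1
  have hRrank1 : R.rank ≤ 1 := by
    rw [Matrix.rank]
    have hle : LinearMap.range R.mulVecLin ≤ Submodule.span F {c} := by
      rintro x ⟨y, rfl⟩
      rw [Matrix.mulVecLin_apply, hRmul y]
      exact Submodule.smul_mem _ _ (Submodule.mem_span_singleton_self c)
    exact le_trans (Submodule.finrank_mono hle) (finrank_span_singleton hcne).le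
  have hRne0 : R.rank ≠ 0 := by
    intro h
    rw [Matrix.rank, Submodule.finrank_eq_zero] at h
    have hz := LinearMap.range_eq_bot.mp h
    have h0 : R.mulVec (Pi.single j 1) = 0 := by
      rw [← Matrix.mulVecLin_apply, hz]; simp
    have hRij : R i j = 0 := by
      have := congrFun h0 i
      simpa [Matrix.mulVec, dotProduct, Pi.single_apply, mul_ite,
        Finset.sum_ite_eq'] using this
    rw [hR] at hRij
    simp only [Matrix.of_apply] at hRij
    field_simp at hRij
    exact hij hRij
  have hRrank : R.rank = 1 := le_antisymm hRrank1 (by omega)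
  -- row i of D - R is zero, and range(D-R) ⊆ range(D)
  have hDRrow : ∀ x, (D - R).mulVec x i = 0 := by
    intro x
    simp only [Matrix.mulVec, dotProduct, Matrix.sub_apply, hR, Matrix.of_apply]
    exact Finset.sum_eq_zero fun b _ => by field_simp; simp
  -- rank (D - R) ≤ D.rank - 1
  have hDRle : (D - R).rank + 1 ≤ D.rank := by
    have hW : LinearMap.range (D - R).mulVecLin ≤
        LinearMap.range D.mulVecLin ⊓ LinearMap.ker (LinearMap.proj i) := by
      rintro x ⟨y, rfl⟩
      constructor
      · rw [Matrix.mulVecLin_apply, Matrix.sub_mulVec]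
        have hRy : R.mulVec y ∈ LinearMap.range D.mulVecLin := by
          rw [hRmul y]
          exact Submodule.smul_mem _ _ ⟨Pi.single j 1, hcD⟩
        exact Submodule.sub_mem _ ⟨y, rfl⟩ hRy
      · simpa [Matrix.sub_mulVec] using hDRrow y
    have hlt : LinearMap.range D.mulVecLin ⊓ LinearMap.ker (LinearMap.proj i)
        < LinearMap.range D.mulVecLin := by
      refine lt_of_le_of_ne inf_le_left (fun h => ?_)
      have hcmem : c ∈ LinearMap.range D.mulVecLin ⊓ LinearMap.ker (LinearMap.proj i) := by
        rw [h]; exact ⟨Pi.single j 1, hcD⟩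
      exact hij hcmem.2
    have := Submodule.finrank_lt_finrank_of_lt hlt
    have := Submodule.finrank_mono hW
    rw [Matrix.rank, Matrix.rank]
    omega
  have hDRge : D.rank ≤ (D - R).rank + 1 := by
    have : D = (D - R) + R := by abel
    calc D.rank = ((D - R) + R).rank := by rw [← this]
    _ ≤ (D - R).rank + R.rank := rank_add_le' _ _
    _ = (D - R).rank + 1 := by rw [hRrank]
  have hDR : (D - R).rank + 1 = D.rank := le_antisymm hDRle hDRge
  -- assemble
  have hsub : M₂ - (M₁ + R) = D - R := by rw [hD]; abel
  have key1 : (M₁ + R).rank ≤ M₁.rank + 1 := by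
    have := rank_add_le' M₁ R; omega
  have key2 : M₂.rank ≤ (D - R).rank + (M₁ + R).rank := by
    have hM2 : M₂ = (D - R) + (M₁ + R) := by rw [hD]; abel
    calc M₂.rank = ((D - R) + (M₁ + R)).rank := by rw [← hM2]
    _ ≤ (D - R).rank + (M₁ + R).rank := rank_add_le' _ _
  have hM'rank : (M₁ + R).rank = M₁.rank + 1 := by omega
  refine ⟨M₁ + R, hM'rank, ?_, ?_⟩
  · simpa using hRrank
  · rw [hsub]; omega
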